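/- For every p ∈ (1,2], the Banach–Mazur distance from ℓ_p^3 to ℓ_∞^3 is at most (1/10)·(4^p + 2)^{1/p}·(2·3^{p/(p−1)} + 1)^{(p−1)/p}. -/

import Mathlib

open scoped Pointwise

/-- The `p`-norm on `ℝ³` (for a real exponent `p ≥ 1`). -/
noncomputable def pnorm (p : ℝ) (x : Fin 3 → ℝ) : ℝ :=
  (∑ i, |x i| ^ p) ^ (1 / p)

/-- The unit ball of `ℓ_p^3`. -/
def ballP (p : ℝ) : Set (Fin 3 → ℝ) := {x | pnorm p x ≤ 1}

/-- The unit ball of `ℓ_∞^3`. -/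
def ballInf : Set (Fin 3 → ℝ) := {x | ∀ i, |x i| ≤ 1}

/-- The multiplicative Banach–Mazur distance between origin-symmetric convex
bodies: `inf {γ ≥ 1 : ∃ nonsingular linear T, T(L) ⊆ K ⊆ γ T(L)}`. -/
noncomputable def BMdist (K L : Set (Fin 3 → ℝ)) : ℝ :=
  sInf {γ : ℝ | 1 ≤ γ ∧ ∃ T : (Fin 3 → ℝ) ≃ₗ[ℝ] (Fin 3 → ℝ),
    (T : (Fin 3 → ℝ) →ₗ[ℝ] (Fin 3 → ℝ)) '' L ⊆ K ∧
    K ⊆ γ • ((T : (Fin 3 → ℝ) →ₗ[ℝ] (Fin 3 → ℝ)) '' L)}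

/- ### Auxiliary lemmas -/

lemma abs_rpow_convex {p : ℝ} (hp : 1 ≤ p) {l : ℝ} (hl0 : 0 ≤ l) (hl1 : l ≤ 1) (u v : ℝ) :
    |l*u + (1-l)*v| ^ p ≤ l * |u|^p + (1-l) * |v|^p := by
  have hp0 : 0 ≤ p := le_trans zero_le_one hp
  have h1 : |l*u + (1-l)*v| ≤ l*|u| + (1-l)*|v| := by
    calc |l*u + (1-l)*v| ≤ |l*u| + |(1-l)*v| := abs_add_le _ _
    _ = l*|u| + (1-l)*|v| := by
        rw [abs_mul, abs_mul, abs_of_nonneg hl0, abs_of_nonneg (a := 1-l) (by linarith)]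
  have h2 : |l*u + (1-l)*v| ^ p ≤ (l*|u| + (1-l)*|v|) ^ p :=
    Real.rpow_le_rpow (abs_nonneg _) h1 hp0
  have h3 := (convexOn_rpow hp).2 (Set.mem_Ici.mpr (abs_nonneg u)) (Set.mem_Ici.mpr (abs_nonneg v))
    hl0 (by linarith : (0:ℝ) ≤ 1 - l) (by ring)
  simp only [smul_eq_mul] at h3
  linarith

lemma step3 {p : ℝ} (hp : 1 ≤ p) (c1 c2 c3 d1 d2 d3 : ℝ) {t : ℝ} (ht : |t| ≤ 1) :
    |c1*t+d1|^p + |c2*t+d2|^p + |c3*t+d3|^p ≤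
      max (|c1+d1|^p+|c2+d2|^p+|c3+d3|^p) (|d1-c1|^p+|d2-c2|^p+|d3-c3|^p) := by
  rw [abs_le] at ht
  set l : ℝ := (1+t)/2 with hl
  have hl0 : 0 ≤ l := by simp only [hl]; linarith
  have hl1 : l ≤ 1 := by simp only [hl]; linarith
  have e : ∀ c d : ℝ, c*t+d = l*(c+d) + (1-l)*(d-c) := by intro c d; simp only [hl]; ring
  have b1 := abs_rpow_convex hp hl0 hl1 (c1+d1) (d1-c1)
  have b2 := abs_rpow_convex hp hl0 hl1 (c2+d2) (d2-c2)
  have b3 := abs_rpow_convex hp hl0 hl1 (c3+d3) (d3-c3)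
  rw [← e] at b1 b2 b3
  set A := |c1+d1|^p+|c2+d2|^p+|c3+d3|^p with hA
  set B := |d1-c1|^p+|d2-c2|^p+|d3-c3|^p with hB
  have hcomb : |c1*t+d1|^p + |c2*t+d2|^p + |c3*t+d3|^p ≤ l*A + (1-l)*B := by
    simp only [hA, hB]; linarith
  refine hcomb.trans ?_
  rcases le_total A B with h | h
  · calc l*A + (1-l)*B ≤ l*B + (1-l)*B := by nlinarith
    _ = B := by ring
    _ ≤ _ := le_max_right _ _
  · calc l*A + (1-l)*B ≤ l*A + (1-l)*A := by nlinarith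
    _ = A := by ring
    _ ≤ _ := le_max_left _ _

lemma step3' {p : ℝ} (hp : 1 ≤ p) (c1 c2 c3 d1 d2 d3 : ℝ) {t : ℝ} (ht : |t| ≤ 1)
    {x1 x2 x3 P1 P2 P3 M1 M2 M3 : ℝ}
    (hx1 : x1 = c1*t+d1) (hx2 : x2 = c2*t+d2) (hx3 : x3 = c3*t+d3)
    (hP1 : P1 = c1+d1) (hP2 : P2 = c2+d2) (hP3 : P3 = c3+d3)
    (hM1 : M1 = d1-c1) (hM2 : M2 = d2-c2) (hM3 : M3 = d3-c3) :
    |x1|^p + |x2|^p + |x3|^p ≤ max (|P1|^p+|P2|^p+|P3|^p) (|M1|^p+|M2|^p+|M3|^p) := by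
  subst hx1 hx2 hx3 hP1 hP2 hP3 hM1 hM2 hM3
  exact step3 hp c1 c2 c3 d1 d2 d3 ht

lemma two_four_ineq {p : ℝ} (hp : 1 ≤ p) : 3*(2:ℝ)^p ≤ 4^p + 2 := by
  have h2 : (2:ℝ) ≤ 2^p := by
    calc (2:ℝ) = 2^(1:ℝ) := (Real.rpow_one 2).symm
    _ ≤ 2^p := Real.rpow_le_rpow_of_exponent_le one_le_two hp
  have h4 : (4:ℝ)^p = 2^p * 2^p := by
    rw [show (4:ℝ) = 2*2 by norm_num, Real.mul_rpow (by norm_num) (by norm_num)]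
  nlinarith

/-- The three-term sum appearing in the first inclusion. -/
noncomputable def S (p u v w : ℝ) : ℝ :=
  |3/2*u + 3/2*v - w|^p + |3/2*u - v + 3/2*w|^p + |-u + 3/2*v + 3/2*w|^p

lemma cube_bound {p : ℝ} (hp : 1 ≤ p) {u v w : ℝ} (hu : |u| ≤ 1) (hv : |v| ≤ 1) (hw : |w| ≤ 1) :
    S p u v w ≤ 4^p + 2 := by
  have hred1 : ∀ u v w : ℝ, |u| ≤ 1 → S p u v w ≤ max (S p 1 v w) (S p (-1) v w) := by
    intro u v w hu
    simp only [S]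
    exact step3' hp (3/2) (3/2) (-1) (3/2*v - w) (-v + 3/2*w) (3/2*v + 3/2*w) hu
      (by ring) (by ring) (by ring) (by ring) (by ring) (by ring) (by ring) (by ring) (by ring)
  have hred2 : ∀ u v w : ℝ, |v| ≤ 1 → S p u v w ≤ max (S p u 1 w) (S p u (-1) w) := by
    intro u v w hv
    simp only [S]
    exact step3' hp (3/2) (-1) (3/2) (3/2*u - w) (3/2*u + 3/2*w) (-u + 3/2*w) hv
      (by ring) (by ring) (by ring) (by ring) (by ring) (by ring) (by ring) (by ring) (by ring)
  have hred3 : ∀ u v w : ℝ, |w| ≤ 1 → S p u v w ≤ max (S p u v 1) (S p u v (-1)) := by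
    intro u v w hw
    simp only [S]
    exact step3' hp (-1) (3/2) (3/2) (3/2*u + 3/2*v) (3/2*u - v) (-u + 3/2*v) hw
      (by ring) (by ring) (by ring) (by ring) (by ring) (by ring) (by ring) (by ring) (by ring)
  have h14 : |(4:ℝ)|^p = 4^p := by rw [abs_of_nonneg]; norm_num
  have h12 : |(2:ℝ)|^p = 2^p := by rw [abs_of_nonneg]; norm_num
  have h1m2 : |(-2:ℝ)|^p = 2^p := by rw [abs_neg, abs_of_nonneg]; norm_num
  have h1m4 : |(-4:ℝ)|^p = 4^p := by rw [abs_neg, abs_of_nonneg]; norm_num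
  have h11 : |(1:ℝ)|^p = 1 := by rw [abs_one, Real.one_rpow]
  have h1m1 : |(-1:ℝ)|^p = 1 := by rw [abs_neg, abs_one, Real.one_rpow]
  have key := two_four_ineq hp
  refine le_trans (hred1 u v w hu) (max_le ?_ ?_) <;>
  refine le_trans (hred2 _ _ _ hv) (max_le ?_ ?_) <;>
  refine le_trans (hred3 _ _ _ hw) (max_le ?_ ?_) <;>
  · simp only [S]
    norm_num [h14, h12, h1m2, h1m4, h11, h1m1]
    try linarith

/- ### The matrices -/

noncomputable def Mmat : Matrix (Fin 3) (Fin 3) ℝ := !![3/2,3/2,-1; 3/2,-1,3/2; -1,3/2,3/2]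
def Nmat : Matrix (Fin 3) (Fin 3) ℝ := !![3,3,-1; 3,-1,3; -1,3,3]

lemma MN_eq : Mmat * Nmat = (10:ℝ) • 1 := by
  rw [Mmat, Nmat, Matrix.mul_fin_three,
    show (1 : Matrix (Fin 3) (Fin 3) ℝ) = !![1,0,0;0,1,0;0,0,1] by
      ext i j; fin_cases i <;> fin_cases j <;>
        simp [Matrix.one_apply, Matrix.vecHead, Matrix.vecTail]]
  norm_num [Matrix.smul_of, Matrix.smul_cons]

lemma NM_eq : Nmat * Mmat = (10:ℝ) • 1 := by
  rw [Mmat, Nmat, Matrix.mul_fin_three,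
    show (1 : Matrix (Fin 3) (Fin 3) ℝ) = !![1,0,0;0,1,0;0,0,1] by
      ext i j; fin_cases i <;> fin_cases j <;>
        simp [Matrix.one_apply, Matrix.vecHead, Matrix.vecTail]]
  norm_num [Matrix.smul_of, Matrix.smul_cons]

lemma Mmat_mulVec (x : Fin 3 → ℝ) :
    Mmat.mulVec x 0 = 3/2*x 0 + 3/2*x 1 - x 2 ∧
    Mmat.mulVec x 1 = 3/2*x 0 - x 1 + 3/2*x 2 ∧
    Mmat.mulVec x 2 = -x 0 + 3/2*x 1 + 3/2*x 2 := by
  refine ⟨?_, ?_, ?_⟩ <;>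
    (simp [Mmat, Matrix.mulVec, dotProduct, Fin.sum_univ_three, Matrix.vecHead, Matrix.vecTail]; try ring)

lemma Nmat_mulVec (x : Fin 3 → ℝ) :
    Nmat.mulVec x 0 = 3*x 0 + 3*x 1 - x 2 ∧
    Nmat.mulVec x 1 = 3*x 0 - x 1 + 3*x 2 ∧
    Nmat.mulVec x 2 = -x 0 + 3*x 1 + 3*x 2 := by
  refine ⟨?_, ?_, ?_⟩ <;>
    (simp [Nmat, Matrix.mulVec, dotProduct, Fin.sum_univ_three, Matrix.vecHead, Matrix.vecTail]; try ring)

/-- For every `p ∈ (1,2]`, the Banach–Mazur distance from `ℓ_p^3` to `ℓ_∞^3`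
is at most `(1/10)·(4^p + 2)^{1/p}·(2·3^{p/(p−1)} + 1)^{(p−1)/p}`. -/
theorem bm_lp3_linf3_bound (p : ℝ) (hp1 : 1 < p) (hp2 : p ≤ 2) :
    BMdist (ballP p) ballInf
      ≤ (1 / 10) * ((4 : ℝ) ^ p + 2) ^ (1 / p)
          * (2 * (3 : ℝ) ^ (p / (p - 1)) + 1) ^ ((p - 1) / p) := by
  have hp0 : (0:ℝ) < p := lt_trans one_pos hp1
  have hpn : p ≠ 0 := ne_of_gt hp0
  have hp1' : (1:ℝ) ≤ p := le_of_lt hp1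
  have hpm : (0:ℝ) < p - 1 := by linarith
  set q := p / (p - 1) with hq
  have hq0 : 0 < q := div_pos hp0 hpm
  have hconj : Real.HolderConjugate p q := by
    exact (Real.holderConjugate_iff_eq_conjExponent hp1).2 hq
  set a := ((4:ℝ)^p + 2)^(1/p) with haDef
  have h4p2 : (0:ℝ) < 4^p + 2 := by positivity
  have hapos : 0 < a := Real.rpow_pos_of_pos h4p2 _
  have hane : a ≠ 0 := ne_of_gt hapos
  have ha4 : (4:ℝ) ≤ a := by
    have h1 : ((4:ℝ)^p)^(1/p) ≤ a := by
      rw [haDef]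
      exact Real.rpow_le_rpow (by positivity) (by linarith) (by positivity)
    rwa [← Real.rpow_mul (by norm_num), mul_one_div_cancel hpn, Real.rpow_one] at h1
  set b := (2*(3:ℝ)^q + 1)^((p-1)/p) with hbDef
  have h3q : (0:ℝ) < 2*3^q+1 := by positivity
  have hbpos : 0 < b := Real.rpow_pos_of_pos h3q _
  have hbne : b ≠ 0 := ne_of_gt hbpos
  have hqe : q * ((p-1)/p) = 1 := by rw [hq]; field_simp
  have hb3 : (3:ℝ) ≤ b := by
    have h3qpos : (0:ℝ) < 3^q := Real.rpow_pos_of_pos (by norm_num) _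
    have h1 : ((3:ℝ)^q)^((p-1)/p) ≤ b := by
      rw [hbDef]
      exact Real.rpow_le_rpow (by positivity) (by linarith) (by positivity)
    rwa [← Real.rpow_mul (by norm_num), hqe, Real.rpow_one] at h1
  set γ := 1/10 * a * b with hγDef
  have hγ1 : (1:ℝ) ≤ γ := by rw [hγDef]; nlinarith
  have hγpos : (0:ℝ) < γ := lt_of_lt_of_le one_pos hγ1
  have hγne : γ ≠ 0 := ne_of_gt hγpos
  -- the linear equivalence
  have hAB : (a⁻¹ • Mmat) * ((a/10) • Nmat) = 1 := by
    rw [Matrix.smul_mul, Matrix.mul_smul, smul_smul, MN_eq, smul_smul]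
    rw [show a⁻¹ * (a / 10) * 10 = 1 by field_simp; all_goals ring]
    exact one_smul _ _
  have hBA : ((a/10) • Nmat) * (a⁻¹ • Mmat) = 1 := by
    rw [Matrix.smul_mul, Matrix.mul_smul, smul_smul, NM_eq, smul_smul]
    rw [show a / 10 * a⁻¹ * 10 = 1 by field_simp; all_goals ring]
    exact one_smul _ _
  set T : (Fin 3 → ℝ) ≃ₗ[ℝ] (Fin 3 → ℝ) := Matrix.toLin'OfInv hBA hAB with hTdef
  have hT : ((T : (Fin 3 → ℝ) ≃ₗ[ℝ] (Fin 3 → ℝ)) : (Fin 3 → ℝ) →ₗ[ℝ] (Fin 3 → ℝ))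
      = Matrix.toLin' (a⁻¹ • Mmat) := rfl
  -- the smul-pnorm computation
  have hpnorm_smul : ∀ (c : ℝ), 0 ≤ c → ∀ yv : Fin 3 → ℝ,
      pnorm p (c • yv) = c * (∑ i, |yv i|^p)^(1/p) := by
    intro c hc yv
    unfold pnorm
    have habs : ∀ i, |(c • yv) i|^p = c^p * |yv i|^p := fun i => by
      rw [Pi.smul_apply, smul_eq_mul, abs_mul, abs_of_nonneg hc,
        Real.mul_rpow hc (abs_nonneg _)]
    simp_rw [habs]
    rw [← Finset.mul_sum, Real.mul_rpow (Real.rpow_nonneg hc _) (by positivity),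
      ← Real.rpow_mul hc, mul_one_div_cancel hpn, Real.rpow_one]
  apply csInf_le ⟨1, fun x hx => hx.1⟩
  refine ⟨hγ1, T, ?_, ?_⟩
  · -- T(ballInf) ⊆ ballP
    rw [hT]
    rintro y ⟨x, hx, rfl⟩
    have hx' : ∀ i, |x i| ≤ 1 := hx
    show pnorm p (Matrix.toLin' (a⁻¹ • Mmat) x) ≤ 1
    rw [Matrix.toLin'_apply, Matrix.smul_mulVec,
      hpnorm_smul _ (inv_nonneg.mpr hapos.le)]
    obtain ⟨e0, e1, e2⟩ := Mmat_mulVec x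
    have hsum : ∑ i, |Mmat.mulVec x i|^p ≤ 4^p + 2 := by
      rw [Fin.sum_univ_three, e0, e1, e2]
      simpa only [S] using cube_bound hp1' (hx' 0) (hx' 1) (hx' 2)
    calc a⁻¹ * (∑ i, |Mmat.mulVec x i|^p)^(1/p)
        ≤ a⁻¹ * ((4:ℝ)^p + 2)^(1/p) := by
          exact mul_le_mul_of_nonneg_left
            (Real.rpow_le_rpow (by positivity) hsum (by positivity))
            (inv_nonneg.mpr hapos.le)
      _ = 1 := by rw [← haDef]; exact inv_mul_cancel₀ hane
  · -- ballP ⊆ γ • T(ballInf)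
    rw [hT]
    intro x hx
    have hxp : pnorm p x ≤ 1 := hx
    -- Hölder bound for each row of Nmat
    have hrow : ∀ n : Fin 3 → ℝ, (∑ i, |n i|^q) = 2*3^q+1 → |∑ i, x i * n i| ≤ b := by
      intro n hn
      have h1q : (1:ℝ)/q = (p-1)/p := by rw [hq, one_div_div]
      have hfac : ((∑ i, |x i|^p)^(1/p)) * ((∑ i, |n i|^q)^(1/q)) ≤ b := by
        rw [hn, h1q]
        calc ((∑ i, |x i|^p)^(1/p)) * ((2*3^q+1)^((p-1)/p))
            ≤ 1 * ((2*3^q+1)^((p-1)/p)) := by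
              refine mul_le_mul_of_nonneg_right ?_ (by positivity)
              exact hxp
          _ = b := by rw [one_mul, hbDef]
      refine abs_le.mpr ⟨?_, ?_⟩
      · have h2 := Real.inner_le_Lp_mul_Lq Finset.univ x (fun i => -n i) hconj
        simp only [abs_neg, mul_neg, Finset.sum_neg_distrib] at h2
        linarith [h2.trans hfac]
      · exact (Real.inner_le_Lp_mul_Lq Finset.univ x n hconj).trans hfac
    have hb0 : |3*x 0 + 3*x 1 - x 2| ≤ b := by
      have h := hrow ![3,3,-1] (by
        norm_num [Fin.sum_univ_three, Real.one_rpow, Matrix.cons_val_two, Matrix.tail_cons, Matrix.head_cons]; ring)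
      have e : ∑ i, x i * (![3,3,-1] : Fin 3 → ℝ) i = 3*x 0 + 3*x 1 - x 2 := by
        simp [Fin.sum_univ_three]; ring
      rwa [e] at h
    have hb1 : |3*x 0 - x 1 + 3*x 2| ≤ b := by
      have h := hrow ![3,-1,3] (by
        norm_num [Fin.sum_univ_three, Real.one_rpow, Matrix.cons_val_two, Matrix.tail_cons, Matrix.head_cons]; ring)
      have e : ∑ i, x i * (![3,-1,3] : Fin 3 → ℝ) i = 3*x 0 - x 1 + 3*x 2 := by
        simp [Fin.sum_univ_three]; ring
      rwa [e] at h
    have hb2 : |-x 0 + 3*x 1 + 3*x 2| ≤ b := by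
      have h := hrow ![-1,3,3] (by
        norm_num [Fin.sum_univ_three, Real.one_rpow, Matrix.cons_val_two, Matrix.tail_cons, Matrix.head_cons]; ring)
      have e : ∑ i, x i * (![-1,3,3] : Fin 3 → ℝ) i = -x 0 + 3*x 1 + 3*x 2 := by
        simp [Fin.sum_univ_three]; ring
      rwa [e] at h
    obtain ⟨f0, f1, f2⟩ := Nmat_mulVec x
    set y : Fin 3 → ℝ := ((a/10) • Nmat).mulVec (γ⁻¹ • x) with hy
    have hy' : y = (γ⁻¹ * (a/10)) • Nmat.mulVec x := by
      rw [hy, Matrix.smul_mulVec, Matrix.mulVec_smul, smul_smul, mul_comm]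
    have hcoef : γ⁻¹ * (a/10) = b⁻¹ := by
      rw [hγDef]
      field_simp
    have hymem : y ∈ ballInf := by
      intro j
      rw [hy', hcoef, Pi.smul_apply, smul_eq_mul, abs_mul,
        abs_of_nonneg (inv_nonneg.mpr hbpos.le)]
      have hj : |Nmat.mulVec x j| ≤ b := by
        fin_cases j
        · show |Nmat.mulVec x 0| ≤ b; rw [f0]; exact hb0
        · show |Nmat.mulVec x 1| ≤ b; rw [f1]; exact hb1
        · show |Nmat.mulVec x 2| ≤ b; rw [f2]; exact hb2
      calc b⁻¹ * |Nmat.mulVec x j| ≤ b⁻¹ * b :=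
            mul_le_mul_of_nonneg_left hj (inv_nonneg.mpr hbpos.le)
        _ = 1 := inv_mul_cancel₀ hbne
    refine Set.mem_smul_set.mpr ⟨Matrix.toLin' (a⁻¹ • Mmat) y, ⟨y, hymem, rfl⟩, ?_⟩
    rw [Matrix.toLin'_apply, hy, Matrix.mulVec_mulVec, hAB, Matrix.one_mulVec,
      smul_smul, mul_inv_cancel₀ hγne, one_smul]
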